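/- If k₁ ≥ k₂ ≥ 0 and r > 0, then any solution z of the linear delayed ODE z'(t) + k₁ z(t) = k₂ z(t - r) with C¹ initial data on [-r,0] satisfies |z(t)| ≤ C e^{-ε(k₁ - k₂)t} for all t > 0, for some constants C > 0 and ε ∈ (0,1) (ε independent of the initial data). -/

import Mathlib

open Real

noncomputable def delayedExp (r k : ℝ) (t : ℝ) : ℝ :=
  if t < -r then 0
  else if t < 0 then 1
  else ∑ j ∈ Finset.range (⌊t / r⌋.toNat + 2),
    k ^ j * (t - ((j : ℝ) - 1) * r) ^ j / (Nat.factorial j)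

open Filter Set

lemma aux_left_gt {f : ℝ → ℝ} {x d : ℝ} (hf : HasDerivAt f d x) (hd : d < 0) :
    ∀ᶠ t in nhdsWithin x (Set.Iio x), f x < f t := by
  have h := hasDerivAt_iff_tendsto_slope.mp hf
  have h1 : ∀ᶠ t in nhdsWithin x {x}ᶜ, slope f x t < 0 := h.eventually_lt_const hd
  have h2 : ∀ᶠ t in nhdsWithin x (Set.Iio x), slope f x t < 0 :=
    h1.filter_mono (nhdsWithin_mono x (by intro a ha; exact ne_of_lt ha))
  filter_upwards [h2, self_mem_nhdsWithin] with t ht (htx : t < x)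
  rw [slope_def_field, div_neg_iff] at ht
  rcases ht with ⟨h3, h4⟩ | ⟨h3, h4⟩ <;> linarith

lemma aux_left_lt {f : ℝ → ℝ} {x d : ℝ} (hf : HasDerivAt f d x) (hd : 0 < d) :
    ∀ᶠ t in nhdsWithin x (Set.Iio x), f t < f x := by
  have := aux_left_gt (f := fun t => -f t) (hf.neg) (by linarith)
  filter_upwards [this] with t ht
  simpa using ht

set_option maxHeartbeats 1000000 in
lemma key_bound (r k₁ k₂ lam σ M : ℝ) (hr : 0 < r) (hk₁ : k₂ ≤ k₁) (hk₂ : 0 ≤ k₂)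
    (hlam : 0 ≤ lam) (hσ : 0 < σ) (hM : 0 ≤ M)
    (hcond : k₂ * Real.exp (lam * r) ≤ k₁ - lam)
    (z : ℝ → ℝ) (hz : ContinuousOn z (Set.Ici (-r)))
    (hbd : ∀ s ∈ Set.Icc (-r) 0, |z s| ≤ M)
    (hode : ∀ t > (0:ℝ), HasDerivAt z (k₂ * z (t - r) - k₁ * z t) t) :
    ∀ t > (0:ℝ), |z t| ≤ (M + 1) * Real.exp ((σ - lam) * t) := by
  intro t₀ ht₀
  by_contra hcon
  push_neg at hcon
  set g : ℝ → ℝ := fun t => (M + 1) * Real.exp ((σ - lam) * t) with hg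
  have hgt : ∀ t, g t = (M + 1) * Real.exp ((σ - lam) * t) := fun _ => rfl
  have hgpos : ∀ t, 0 < g t := fun t => by rw [hgt]; positivity
  set S : Set ℝ := Set.Icc 0 t₀ ∩ (fun t => |z t| - g t) ⁻¹' (Set.Ici 0) with hS
  have hIcc_sub : Set.Icc (0:ℝ) t₀ ⊆ Set.Ici (-r) := fun x hx => by
    simp only [Set.mem_Ici]; linarith [hx.1]
  have hcontOn : ContinuousOn (fun t => |z t| - g t) (Set.Icc 0 t₀) :=
    ((hz.mono hIcc_sub).abs).sub (by rw [hg]; fun_prop)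
  have hclosed : IsClosed S :=
    hcontOn.preimage_isClosed_of_isClosed isClosed_Icc isClosed_Ici
  have hne : t₀ ∈ S := by
    refine ⟨⟨le_of_lt ht₀, le_refl _⟩, ?_⟩
    simp only [Set.mem_preimage, Set.mem_Ici, hgt]
    linarith
  have hbdd : BddBelow S := ⟨0, fun x hx => hx.1.1⟩
  set T := sInf S with hT
  have hTmem : T ∈ S := hclosed.csInf_mem ⟨t₀, hne⟩ hbdd
  have hTle : T ≤ t₀ := csInf_le hbdd hne
  have hT0 : 0 ≤ T := hTmem.1.1
  have hzT : g T ≤ |z T| := by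
    have h := hTmem.2
    simp only [Set.mem_preimage, Set.mem_Ici] at h
    linarith
  have hz0 : |z 0| ≤ M := hbd 0 ⟨by linarith, le_refl _⟩
  have hTpos : 0 < T := by
    rcases lt_or_eq_of_le hT0 with h | h
    · exact h
    · exfalso
      have hg0 : g 0 = M + 1 := by rw [hgt]; simp
      rw [← h, hg0] at hzT
      linarith
  have hpre : ∀ s, 0 ≤ s → s < T → |z s| < g s := by
    intro s hs0 hsT
    have hns : s ∉ S := notMem_of_lt_csInf hsT hbdd
    have hsmem : s ∈ Set.Icc 0 t₀ := ⟨hs0, by linarith⟩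
    by_contra hcc
    push_neg at hcc
    exact hns ⟨hsmem, by simp only [Set.mem_preimage, Set.mem_Ici]; linarith⟩
  have hk₁0 : (0:ℝ) ≤ k₁ := le_trans hk₂ hk₁
  have hk₁lam : 0 ≤ k₁ - lam := le_trans (by positivity) hcond
  -- delayed term bound
  have hdelay : k₂ * |z (T - r)| ≤ (k₁ - lam) * g T := by
    rcases le_or_gt (T - r) 0 with hc | hc
    · have hmem : T - r ∈ Set.Icc (-r) 0 := ⟨by linarith, hc⟩
      have h1 : |z (T - r)| ≤ M := hbd _ hmem
      have h2 : k₂ * Real.exp (lam * r) * Real.exp (-(lam * r)) = k₂ := by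
        rw [mul_assoc, ← Real.exp_add]; simp
      have h3 : k₂ ≤ (k₁ - lam) * Real.exp (-(lam * r)) := by
        rw [← h2]; gcongr
      have h4 : Real.exp (-(lam * r)) ≤ Real.exp ((σ - lam) * T) := by
        apply Real.exp_le_exp.mpr
        nlinarith
      have habs : 0 ≤ |z (T - r)| := abs_nonneg _
      calc k₂ * |z (T - r)| ≤ k₂ * (M + 1) := by nlinarith
        _ ≤ (k₁ - lam) * Real.exp (-(lam * r)) * (M + 1) := by nlinarith
        _ ≤ (k₁ - lam) * Real.exp ((σ - lam) * T) * (M + 1) := by gcongr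
        _ = (k₁ - lam) * g T := by rw [hgt]; ring
    · have h1 : |z (T - r)| < g (T - r) := hpre _ hc.le (by linarith)
      have h2 : Real.exp ((σ - lam) * (T - r)) = Real.exp ((σ - lam) * T) * Real.exp ((lam - σ) * r) := by
        rw [← Real.exp_add]; ring_nf
      have h3 : k₂ * Real.exp ((lam - σ) * r) ≤ k₁ - lam := by
        calc k₂ * Real.exp ((lam - σ) * r) ≤ k₂ * Real.exp (lam * r) := by
              gcongr
              linarith
          _ ≤ k₁ - lam := hcond
      calc k₂ * |z (T - r)| ≤ k₂ * g (T - r) := by nlinarith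
        _ = k₂ * Real.exp ((lam - σ) * r) * ((M + 1) * Real.exp ((σ - lam) * T)) := by
            rw [hgt, h2]; ring
        _ ≤ (k₁ - lam) * ((M + 1) * Real.exp ((σ - lam) * T)) :=
            mul_le_mul_of_nonneg_right h3 (by positivity)
        _ = (k₁ - lam) * g T := by rw [hgt]
  -- derivative of g
  have hgderiv : HasDerivAt g ((σ - lam) * g T) T := by
    have h := (((hasDerivAt_id T).const_mul (σ - lam)).exp).const_mul (M + 1)
    simp only [id_eq, mul_one] at h
    refine h.congr_deriv ?_
    rw [hgt]; ring
  have hzderiv := hode T hTpos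
  have habs1 : k₂ * z (T - r) ≤ (k₁ - lam) * g T := by
    have := le_abs_self (z (T - r))
    nlinarith
  have habs2 : -((k₁ - lam) * g T) ≤ k₂ * z (T - r) := by
    have := neg_abs_le (z (T - r))
    nlinarith
  rcases abs_cases (z T) with ⟨he, _⟩ | ⟨he, _⟩
  · -- z T ≥ g T > 0
    have hzTg : g T ≤ z T := by rw [he] at hzT; exact hzT
    have hk1mul : k₁ * g T ≤ k₁ * z T := mul_le_mul_of_nonneg_left hzTg hk₁0
    have hσg : 0 < σ * g T := mul_pos hσ (hgpos T)
    have hD : (k₂ * z (T - r) - k₁ * z T) - (σ - lam) * g T < 0 := by nlinarith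
    have hh : HasDerivAt (fun t => z t - g t) ((k₂ * z (T - r) - k₁ * z T) - (σ - lam) * g T) T :=
      hzderiv.sub hgderiv
    have hev := aux_left_gt hh hD
    have hIoo : Set.Ioo 0 T ∈ nhdsWithin T (Set.Iio T) :=
      Ioo_mem_nhdsLT_of_mem ⟨hTpos, le_refl _⟩
    obtain ⟨t, ht1, ht2⟩ := (hev.and (eventually_of_mem hIoo (fun x hx => hx))).exists
    have ht1' : z T - g T < z t - g t := ht1
    have hlt : g t < z t := by linarith
    have := hpre t ht2.1.le ht2.2
    have := le_abs_self (z t)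
    linarith
  · -- z T ≤ -g T
    have hzTg : z T ≤ -g T := by rw [he] at hzT; linarith
    have hk1mul : k₁ * z T ≤ k₁ * (-g T) := mul_le_mul_of_nonneg_left hzTg hk₁0
    have hσg : 0 < σ * g T := mul_pos hσ (hgpos T)
    have hD : 0 < (k₂ * z (T - r) - k₁ * z T) + (σ - lam) * g T := by nlinarith
    have hh : HasDerivAt (fun t => z t + g t) ((k₂ * z (T - r) - k₁ * z T) + (σ - lam) * g T) T :=
      hzderiv.add hgderiv
    have hev := aux_left_lt hh hD
    have hIoo : Set.Ioo 0 T ∈ nhdsWithin T (Set.Iio T) :=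
      Ioo_mem_nhdsLT_of_mem ⟨hTpos, le_refl _⟩
    obtain ⟨t, ht1, ht2⟩ := (hev.and (eventually_of_mem hIoo (fun x hx => hx))).exists
    have ht1' : z t + g t < z T + g T := ht1
    have hlt : z t < -g t := by linarith
    have := hpre t ht2.1.le ht2.2
    have := neg_abs_le (z t)
    linarith

theorem stmt_7 (r k₁ k₂ : ℝ) (hr : 0 < r) (hk₁ : k₁ ≥ k₂) (hk₂ : k₂ ≥ 0) :
    ∃ ε ∈ Set.Ioo (0 : ℝ) 1, ∀ z₀ z : ℝ → ℝ, ContDiff ℝ 1 z₀ →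
      ContinuousOn z (Set.Ici (-r)) →
      (∀ s ∈ Set.Icc (-r) (0 : ℝ), z s = z₀ s) →
      (∀ t > (0 : ℝ), HasDerivAt z (k₂ * z (t - r) - k₁ * z t) t) →
      ∃ C > (0 : ℝ), ∀ t > (0 : ℝ),
        |z t| ≤ C * Real.exp (-ε * (k₁ - k₂) * t) := by
  set d := k₁ - k₂ with hd
  have hd0 : 0 ≤ d := by simp [hd]; linarith
  set A := k₂ * r * Real.exp (d * r) + 1 with hA
  have hA1 : (1:ℝ) ≤ A := by
    have : 0 ≤ k₂ * r * Real.exp (d * r) := by positivity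
    linarith
  have hApos : 0 < A := by linarith
  set ε := min (1/2 : ℝ) (1 / (2 * A)) with hε
  have hεpos : 0 < ε := lt_min (by norm_num) (by positivity)
  have hεhalf : ε ≤ 1/2 := min_le_left _ _
  have hεA : ε * A ≤ 1/2 := by
    have h1 : ε ≤ 1/(2*A) := min_le_right _ _
    have h2 : ε * A ≤ (1/(2*A)) * A := mul_le_mul_of_nonneg_right h1 hApos.le
    have h3 : (1/(2*A)) * A = 1/2 := by field_simp
    linarith
  set lam := ε * d with hlam
  have hlam0 : 0 ≤ lam := by positivity
  have hcond : k₂ * Real.exp (lam * r) ≤ k₁ - lam := by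
    set x := lam * r with hx
    have hx0 : 0 ≤ x := by positivity
    have hxle : x ≤ d * r := by
      have : ε * (d * r) ≤ 1 * (d * r) := by
        apply mul_le_mul_of_nonneg_right (by linarith) (by positivity)
      calc x = ε * (d * r) := by rw [hx, hlam]; ring
        _ ≤ 1 * (d * r) := this
        _ = d * r := by ring
    have he1 : Real.exp x ≤ Real.exp (d * r) := Real.exp_le_exp.mpr hxle
    have he2 : Real.exp x - 1 ≤ x * Real.exp x := by
      have h := Real.add_one_le_exp (-x)
      have hpos := Real.exp_pos x
      have : (-x + 1) * Real.exp x ≤ Real.exp (-x) * Real.exp x := by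
        apply mul_le_mul_of_nonneg_right h hpos.le
      rw [← Real.exp_add] at this
      simp at this
      nlinarith
    have hchain : k₂ * (Real.exp x - 1) ≤ ε * d * (k₂ * r * Real.exp (d * r)) := by
      have c1 : k₂ * (Real.exp x - 1) ≤ k₂ * (x * Real.exp x) := by
        apply mul_le_mul_of_nonneg_left he2 hk₂
      have c2 : k₂ * (x * Real.exp x) ≤ k₂ * (x * Real.exp (d * r)) := by
        apply mul_le_mul_of_nonneg_left _ hk₂
        apply mul_le_mul_of_nonneg_left he1 hx0
      have c3 : k₂ * (x * Real.exp (d * r)) = ε * d * (k₂ * r * Real.exp (d * r)) := by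
        rw [hx, hlam]; ring
      linarith
    have hfin : ε * d * (k₂ * r * Real.exp (d * r)) ≤ (1/2) * d := by
      have : ε * A * d ≤ (1/2) * d := mul_le_mul_of_nonneg_right hεA hd0
      have hexp : 0 ≤ Real.exp (d*r) := (Real.exp_pos _).le
      nlinarith
    have : k₂ * (Real.exp x - 1) ≤ d * (1 - ε) := by nlinarith
    have hgoal : k₂ * Real.exp x ≤ k₂ + d - ε * d := by linarith
    calc k₂ * Real.exp (lam * r) = k₂ * Real.exp x := rfl
      _ ≤ k₂ + d - ε * d := hgoal
      _ = k₁ - lam := by rw [hlam, hd]; ring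
  refine ⟨ε, ⟨hεpos, by linarith⟩, ?_⟩
  intro z₀ z hz₀ hz hinit hode
  have hne : (Set.Icc (-r) (0:ℝ)).Nonempty := ⟨0, by constructor <;> linarith⟩
  have hsub : Set.Icc (-r) (0:ℝ) ⊆ Set.Ici (-r) := Set.Icc_subset_Ici_self
  obtain ⟨x₀, hx₀mem, hx₀max⟩ := isCompact_Icc.exists_isMaxOn hne ((hz.mono hsub).abs)
  set M := |z x₀| with hM
  have hM0 : 0 ≤ M := abs_nonneg _
  refine ⟨M + 1, by linarith, ?_⟩
  intro t ht
  have hσb : ∀ σ > (0:ℝ), |z t| ≤ (M + 1) * Real.exp ((σ - lam) * t) := fun σ hσ =>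
    key_bound r k₁ k₂ lam σ M hr hk₁ hk₂ hlam0 hσ hM0 hcond z hz
      (fun s hs => hx₀max hs) hode t ht
  have htend : Tendsto (fun σ : ℝ => (M + 1) * Real.exp ((σ - lam) * t))
      (nhdsWithin 0 (Set.Ioi 0)) (nhds ((M + 1) * Real.exp ((0 - lam) * t))) := by
    apply Tendsto.mono_left _ nhdsWithin_le_nhds
    exact (Continuous.tendsto (continuous_const.mul (Real.continuous_exp.comp
      ((continuous_id.sub continuous_const).mul continuous_const))) 0)
  have hle := ge_of_tendsto htend
    (eventually_of_mem self_mem_nhdsWithin (fun σ hσ => hσb σ hσ))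
  calc |z t| ≤ (M + 1) * Real.exp ((0 - lam) * t) := hle
    _ = (M + 1) * Real.exp (-ε * (k₁ - k₂) * t) := by rw [hlam, hd]; ring_nf
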